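/- (Theorem 2(I), symmetric case, contrapositive form.) Let S be a symmetric Hermitian tensor in sℍ[m,n] that has a symmetric positive Hermitian decomposition. Then for every integer k ≥ m+1 there exists a truncated moment sequence z : {α ∈ ℕ^{2n} : |α| ≤ 2k} → ℝ such that M_k(z) ⪰ 0, L_{h₁}^{(k)}(z) = 0 where h₁(x) = ‖x‖² − 1 on ℝ^{2n}, and Re(S I J) = L_z(R_{IJ}), Im(S I J) = L_z(T_{IJ}) for all multi-indices I, J. (Hence, if this relaxation is infeasible for some k, S has no symmetric positive Hermitian decomposition, i.e., the corresponding symmetric mixed state is not symmetric separable.) -/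

import Mathlib

/-- The complex vector `u(x) = x_Re + i·x_Im ∈ ℂ^n` from `x ∈ ℝ^{2n}`, whose
coordinates are indexed by `Fin n × Fin 2` (real parts at `0`, imaginary at `1`). -/
noncomputable def uS (n : ℕ) (x : Fin n × Fin 2 → ℝ) (j : Fin n) : ℂ :=
  (x (j, 0) : ℝ) + Complex.I * (x (j, 1) : ℝ)

/-- `P_{IJ}(x) = Π_k u(x)(I k) · conj(u(x)(J k))`. -/
noncomputable def PfunS (m n : ℕ) (I J : Fin m → Fin n) (x : Fin n × Fin 2 → ℝ) : ℂ :=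
  ∏ k, uS n x (I k) * (starRingEnd ℂ) (uS n x (J k))

/-- The sphere polynomial `h₁(x) = ‖x‖² − 1` on `ℝ^{2n}`. -/
noncomputable def spherePolyS (n : ℕ) : MvPolynomial (Fin n × Fin 2) ℝ :=
  (∑ v : Fin n × Fin 2, MvPolynomial.X v ^ 2) - 1

/-- The Riesz functional `L_z(p) = Σ_α p_α z_α`. -/
noncomputable def riesz {V : Type*} (z : (V → ℕ) → ℝ) (p : MvPolynomial V ℝ) : ℝ :=
  ∑ γ ∈ p.support, MvPolynomial.coeff γ p * z ⇑γ


set_option maxHeartbeats 1600000 in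
/-- Theorem 2(I), symmetric case, contrapositive form: if a symmetric
Hermitian tensor `S ∈ sℍ[m,n]` has a symmetric positive Hermitian decomposition, then
for every `k ≥ m + 1` there is a truncated moment sequence `z` on `|α| ≤ 2k` with
`M_k(z) ⪰ 0`, `L_{h₁}^{(k)}(z) = 0`, and `Re(S I J) = L_z(R_{IJ})`,
`Im(S I J) = L_z(T_{IJ})` for all multi-indices `I, J`. -/
theorem relaxation_feasible_of_symPosHermitianDecomp (m n : ℕ)
    (S : (Fin m → Fin n) → (Fin m → Fin n) → ℂ)
    (hHerm : ∀ I J, S I J = (starRingEnd ℂ) (S J I))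
    (hSym : ∀ σ : Equiv.Perm (Fin m), ∀ I J, S (I ∘ σ) (J ∘ σ) = S I J)
    (R T : (Fin m → Fin n) → (Fin m → Fin n) → MvPolynomial (Fin n × Fin 2) ℝ)
    (hdegR : ∀ I J, (R I J).totalDegree ≤ 2 * m)
    (hdegT : ∀ I J, (T I J).totalDegree ≤ 2 * m)
    (hRT : ∀ I J (x : Fin n × Fin 2 → ℝ), PfunS m n I J x =
      (MvPolynomial.eval x (R I J) : ℂ) + Complex.I * (MvPolynomial.eval x (T I J) : ℂ))
    (hdecomp : ∃ (r : ℕ) (lam : Fin r → ℝ) (u : Fin r → Fin n → ℂ),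
      (∀ i, 0 < lam i) ∧ (∀ i, ∑ j, Complex.normSq (u i j) = 1) ∧
      ∀ I J, S I J = ∑ i, (lam i : ℂ) * ∏ k, u i (I k) * (starRingEnd ℂ) (u i (J k))) :
    ∀ t : ℕ, m + 1 ≤ t → ∃ z : (Fin n × Fin 2 → ℕ) → ℝ,
      Matrix.PosSemidef (Matrix.of
        fun α β : {a : Fin n × Fin 2 → Fin (t + 1) // (∑ v, (a v : ℕ)) ≤ t} =>
          z (fun v => (α.1 v : ℕ) + (β.1 v : ℕ))) ∧
      (∀ α β : Fin n × Fin 2 → ℕ,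
        (∑ v, α v) ≤ t - 1 → (∑ v, β v) ≤ t - 1 →
        (∑ γ ∈ (spherePolyS n).support, MvPolynomial.coeff γ (spherePolyS n) *
          z (fun v => α v + β v + γ v)) = 0) ∧
      ∀ I J, (S I J).re = riesz z (R I J) ∧ (S I J).im = riesz z (T I J) := by
  obtain ⟨r, lam, u, hlam, hunit, hS⟩ := hdecomp
  intro t ht
  set x : Fin r → (Fin n × Fin 2 → ℝ) :=
    fun i p => if p.2 = 0 then (u i p.1).re else (u i p.1).im with hxdef
  clear_value x
  have hux : ∀ i j, uS n (x i) j = u i j := by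
    intro i j
    simp only [uS, hxdef]
    norm_num
    rw [mul_comm, Complex.re_add_im]
  have hsphere : ∀ i, ∑ v : Fin n × Fin 2, x i v ^ 2 = 1 := by
    intro i
    rw [Fintype.sum_prod_type]
    have : ∀ j : Fin n, ∑ s : Fin 2, x i (j, s) ^ 2 = Complex.normSq (u i j) := by
      intro j
      rw [Fin.sum_univ_two]
      simp [hxdef, Complex.normSq_apply, sq]
    simp only [this]
    exact hunit i
  set w : Fin r → (Fin n × Fin 2 → ℕ) → ℝ := fun i α => ∏ v, x i v ^ α v with hwdef
  clear_value w
  refine ⟨fun α => ∑ i, lam i * w i α, ?_, ?_, ?_⟩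
  · -- PSD of the moment matrix
    have hw : ∀ (i : Fin r) (α β : {a : Fin n × Fin 2 → Fin (t + 1) // (∑ v, (a v : ℕ)) ≤ t}),
        w i (fun v => (α.1 v : ℕ) + (β.1 v : ℕ)) =
        w i (fun v => (α.1 v : ℕ)) * w i (fun v => (β.1 v : ℕ)) := by
      intro i α β
      rw [hwdef]
      simp only
      rw [← Finset.prod_mul_distrib]
      exact Finset.prod_congr rfl fun v _ => pow_add _ _ _
    set A : Matrix (Fin r) {a : Fin n × Fin 2 → Fin (t + 1) // (∑ v, (a v : ℕ)) ≤ t} ℝ :=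
      Matrix.of fun i α => Real.sqrt (lam i) * w i (fun v => (α.1 v : ℕ)) with hA
    have hpsd := Matrix.posSemidef_conjTranspose_mul_self A
    convert hpsd using 1
    ext α β
    simp only [Matrix.mul_apply, Matrix.conjTranspose_apply, Matrix.of_apply,
      star_trivial, hA, hw]
    refine Finset.sum_congr rfl fun i _ => ?_
    have hs : Real.sqrt (lam i) * Real.sqrt (lam i) = lam i := Real.mul_self_sqrt (hlam i).le
    linear_combination (-(w i fun v => (α.1 v : ℕ)) * (w i fun v => (β.1 v : ℕ))) * hs
  · -- the localizing constraint
    intro α β _ _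
    have hz : ∀ γ : Fin n × Fin 2 →₀ ℕ,
        (∑ i, lam i * w i (fun v => α v + β v + γ v)) =
        ∑ i, lam i * (w i α * w i β) * ∏ v, x i v ^ γ v := by
      intro γ
      refine Finset.sum_congr rfl fun i _ => ?_
      rw [hwdef]
      simp only
      rw [mul_assoc, mul_assoc, ← Finset.prod_mul_distrib, ← Finset.prod_mul_distrib]
      congr 1
      refine Finset.prod_congr rfl fun v _ => ?_
      rw [← pow_add, ← pow_add]
      congr 1
      omega
    simp only [hz, Finset.mul_sum]
    rw [Finset.sum_comm]
    refine Finset.sum_eq_zero fun i _ => ?_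
    have step : ∑ γ ∈ (spherePolyS n).support, MvPolynomial.coeff γ (spherePolyS n) *
        (lam i * (w i α * w i β) * ∏ v, x i v ^ γ v)
        = lam i * (w i α * w i β) *
          ∑ γ ∈ (spherePolyS n).support, MvPolynomial.coeff γ (spherePolyS n) *
            ∏ v, x i v ^ γ v := by
      rw [Finset.mul_sum]
      exact Finset.sum_congr rfl fun γ _ => by ring
    rw [step, ← MvPolynomial.eval_eq']
    have : MvPolynomial.eval (x i) (spherePolyS n) = 0 := by
      simp [spherePolyS, hsphere i]
    rw [this, mul_zero]
  · -- the Riesz functional constraints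
    have hriesz : ∀ p : MvPolynomial (Fin n × Fin 2) ℝ,
        riesz (fun α => ∑ i, lam i * w i α) p = ∑ i, lam i * MvPolynomial.eval (x i) p := by
      intro p
      rw [riesz]
      simp only [Finset.mul_sum]
      rw [Finset.sum_comm]
      refine Finset.sum_congr rfl fun i _ => ?_
      rw [MvPolynomial.eval_eq', Finset.mul_sum]
      refine Finset.sum_congr rfl fun γ _ => ?_
      rw [hwdef]
      ring
    intro I J
    have hSx : S I J = ∑ i, (lam i : ℂ) *
        ((MvPolynomial.eval (x i) (R I J) : ℂ) +
          Complex.I * (MvPolynomial.eval (x i) (T I J) : ℂ)) := by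
      rw [hS I J]
      refine Finset.sum_congr rfl fun i _ => ?_
      rw [← hRT I J (x i), PfunS]
      congr 1
      exact Finset.prod_congr rfl fun k _ => by rw [hux, hux]
    constructor
    · rw [hriesz, hSx, Complex.re_sum]
      refine Finset.sum_congr rfl fun i _ => ?_
      simp [Complex.mul_re, Complex.add_re, Complex.add_im]
    · rw [hriesz, hSx, Complex.im_sum]
      refine Finset.sum_congr rfl fun i _ => ?_
      simp [Complex.mul_im, Complex.add_re, Complex.add_im]
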